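/- Let k and s be integers with s ≥ 2, let n = 2k, and let j be an integer with 2 ≤ j ≤ k−1. Then U_{2s}(cos(jπ/n)) ≥ −(s+1)/2. -/

import Mathlib

open Polynomial Real

set_option maxHeartbeats 1000000 in
lemma sin_ge_09 (x : ℝ) (h0 : 0 ≤ x) (h1 : x ≤ 0.75) : 0.9 * x ≤ Real.sin x := by
  have hy0 : (0:ℝ) ≤ x/2 := by linarith
  have hy1 : x/2 ≤ 0.375 := by linarith
  set y := x/2 with hy
  have habs : |y| ≤ 1 := by rw [abs_of_nonneg hy0]; linarith
  have hs := neg_le_of_abs_le (Real.sin_bound habs)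
  have hc := neg_le_of_abs_le (Real.cos_bound habs)
  rw [abs_of_nonneg hy0] at hs hc
  have h2 : Real.sin x = 2 * Real.sin y * Real.cos y := by
    rw [← Real.sin_two_mul, hy]; ring_nf
  have hy2 : y^2 ≤ 0.140625 := by nlinarith
  have hy3 : y^3 ≤ 0.375 * y^2 := by nlinarith
  have hy4 : y^4 ≤ 0.140625 * y^2 := by nlinarith [sq_nonneg y, sq_nonneg (y^2)]
  have e1 : (0.9738:ℝ) ≤ 1 - y^2/6 - (5/96)*y^3 := by nlinarith
  have e2 : (0.9286:ℝ) ≤ 1 - y^2/2 - (5/96)*y^4 := by nlinarith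
  have e3 : (0.9:ℝ) ≤ (1 - y^2/6 - (5/96)*y^3) * (1 - y^2/2 - (5/96)*y^4) := by
    nlinarith [mul_nonneg (sub_nonneg.mpr e1) (sub_nonneg.mpr e2)]
  have hA : y - y^3/6 - y^4 * (5/96) ≤ Real.sin y := by
    nlinarith [pow_nonneg hy0 4, mul_le_mul_of_nonneg_left hy1 (pow_nonneg hy0 4)]
  have hB : 1 - y^2/2 - y^4 * (5/96) ≤ Real.cos y := by linarith
  have hA0 : 0 ≤ y - y^3/6 - y^4 * (5/96) := by nlinarith [mul_nonneg hy0 (sub_nonneg.mpr e1)]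
  have hB0 : 0 ≤ 1 - y^2/2 - y^4 * (5/96) := by nlinarith
  have hab : (y - y^3/6 - y^4 * (5/96)) * (1 - y^2/2 - y^4 * (5/96)) ≤ Real.sin y * Real.cos y := by
    have hbn : 0 ≤ Real.cos y := le_trans hB0 hB
    calc (y - y^3/6 - y^4 * (5/96)) * (1 - y^2/2 - y^4 * (5/96))
        ≤ (y - y^3/6 - y^4 * (5/96)) * Real.cos y := mul_le_mul_of_nonneg_left hB hA0
      _ ≤ Real.sin y * Real.cos y := mul_le_mul_of_nonneg_right hA hbn
  have key : 2*y*(0.9:ℝ) ≤ 2*y*((1 - y^2/6 - (5/96)*y^3) * (1 - y^2/2 - (5/96)*y^4)) :=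
    mul_le_mul_of_nonneg_left e3 (by linarith)
  have hid : 2*y*((1 - y^2/6 - (5/96)*y^3) * (1 - y^2/2 - (5/96)*y^4))
      = 2 * ((y - y^3/6 - y^4 * (5/96)) * (1 - y^2/2 - y^4 * (5/96))) := by ring
  rw [h2]
  have hx2y : x = 2*y := by rw [hy]; ring
  rw [hx2y]
  nlinarith [hab, key, hid]

lemma sin_pt (b : ℝ) (h1 : 0 ≤ π/2 - b) (h2 : π/2 - b ≤ 1) :
    Real.sin b ≤ 1 - (π/2-b)^2/2 + (π/2-b)^4*(5/96) := by
  have hb := le_of_abs_le (Real.cos_bound (abs_le.mpr ⟨by linarith, h2⟩))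
  have h4 : |π/2 - b|^4 = (π/2-b)^4 := by rw [abs_of_nonneg h1]
  rw [h4] at hb
  have : Real.sin b = Real.cos (π/2 - b) := (Real.cos_pi_div_two_sub b).symm
  rw [this]; linarith

lemma sin11 : Real.sin 1.1 ≤ 0.8918 := by
  have hpl := Real.pi_lt_d6
  have hpg := Real.pi_gt_d6
  have h1 : (0:ℝ) ≤ π/2 - 1.1 := by linarith
  have h2 : π/2 - 1.1 ≤ 1 := by linarith
  have := sin_pt 1.1 h1 h2
  set w := π/2 - 1.1 with hw
  have hw1 : (0.470796:ℝ) ≤ w := by rw [hw]; linarith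
  have hw2 : w ≤ 0.4708 := by rw [hw]; linarith
  nlinarith [pow_le_pow_left₀ (by linarith : (0:ℝ) ≤ 0.470796) hw1 2,
    pow_le_pow_left₀ (by linarith : (0:ℝ) ≤ w) hw2 4]

lemma sin12 : Real.sin 1.2 ≤ 0.9323 := by
  have hpl := Real.pi_lt_d6
  have hpg := Real.pi_gt_d6
  have h1 : (0:ℝ) ≤ π/2 - 1.2 := by linarith
  have h2 : π/2 - 1.2 ≤ 1 := by linarith
  have := sin_pt 1.2 h1 h2
  set w := π/2 - 1.2 with hw
  have hw1 : (0.370796:ℝ) ≤ w := by rw [hw]; linarith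
  have hw2 : w ≤ 0.3708 := by rw [hw]; linarith
  nlinarith [pow_le_pow_left₀ (by linarith : (0:ℝ) ≤ 0.370796) hw1 2,
    pow_le_pow_left₀ (by linarith : (0:ℝ) ≤ w) hw2 4]

lemma sin13 : Real.sin 1.303 ≤ 0.9645 := by
  have hpl := Real.pi_lt_d6
  have hpg := Real.pi_gt_d6
  have h1 : (0:ℝ) ≤ π/2 - 1.303 := by linarith
  have h2 : π/2 - 1.303 ≤ 1 := by linarith
  have := sin_pt 1.303 h1 h2
  set w := π/2 - 1.303 with hw
  have hw1 : (0.267796:ℝ) ≤ w := by rw [hw]; linarith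
  have hw2 : w ≤ 0.2678 := by rw [hw]; linarith
  nlinarith [pow_le_pow_left₀ (by linarith : (0:ℝ) ≤ 0.267796) hw1 2,
    pow_le_pow_left₀ (by linarith : (0:ℝ) ≤ w) hw2 4]

set_option maxHeartbeats 2000000 in
lemma key_ineq (c t : ℝ) (hc : 3/2 ≤ c) (ht0 : 0 < t) (ht : t < π/2) :
    -(c * Real.sin t) ≤ Real.sin ((4*c - 1) * t) := by
  have hpg := Real.pi_gt_d6
  have hpl := Real.pi_lt_d6
  have hst : 0 < Real.sin t := Real.sin_pos_of_pos_of_lt_pi ht0 (by linarith)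
  by_cases h1 : 1 ≤ c * Real.sin t
  · linarith [Real.neg_one_le_sin ((4*c-1)*t)]
  push_neg at h1
  have ht75 : t < 0.75 := by
    by_contra h
    push_neg at h
    have hmono : Real.sin 0.75 ≤ Real.sin t :=
      Real.sin_le_sin_of_le_of_le_pi_div_two (by linarith) (le_of_lt ht) h
    have h075 := sin_ge_09 0.75 (by norm_num) (by norm_num)
    nlinarith
  have h09 : 0.9 * t ≤ Real.sin t := sin_ge_09 t ht0.le (by linarith)
  have hc0 : (0:ℝ) < c := by linarith
  have hMt : 0 < (4*c-1)*t := by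
    apply mul_pos (by linarith) ht0
  by_cases h2 : (4*c-1)*t ≤ π
  · have hnn : 0 ≤ Real.sin ((4*c-1)*t) :=
      Real.sin_nonneg_of_nonneg_of_le_pi hMt.le h2
    nlinarith
  push_neg at h2
  set u := (4*c-1)*t - π with hu
  have hu0 : 0 < u := by simp only [hu]; linarith
  have hsin_eq : Real.sin ((4*c-1)*t) = -Real.sin u := by
    have heq : (4*c-1)*t = u + π := by rw [hu]; ring
    rw [heq, Real.sin_add_pi]
  have h9ct : 0.9 * (c*t) < 1 := by nlinarith [mul_le_mul_of_nonneg_left h09 hc0.le]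
  have hub : u < 1.3029 := by
    have h4c1 : (4*c-1)*t < (4*c)*t := by nlinarith
    -- 0.9*c*t < 1 so 4*c*t < 40/9
    have : 4*(c*t) < 40/9 := by nlinarith
    simp only [hu]
    nlinarith
  rw [hsin_eq]
  have hlow : 0.225*(u + π) ≤ c * Real.sin t := by
    have h1' : 0.9*(c*t) ≤ c * Real.sin t := by nlinarith [mul_le_mul_of_nonneg_left h09 hc0.le]
    have h2' : 0.225*(u + π) ≤ 0.9*(c*t) := by
      have heq : u + π = (4*c-1)*t := by rw [hu]; ring
      rw [heq]
      nlinarith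
    linarith
  have hup : Real.sin u ≤ 0.225*(u + π) := by
    rcases le_or_gt u 0.91 with h | h
    · have := (Real.sin_lt hu0).le
      linarith
    rcases le_or_gt u 1.1 with h' | h'
    · have hm : Real.sin u ≤ Real.sin 1.1 :=
        Real.sin_le_sin_of_le_of_le_pi_div_two (by linarith) (by linarith) h'
      linarith [sin11]
    rcases le_or_gt u 1.2 with h'' | h''
    · have hm : Real.sin u ≤ Real.sin 1.2 :=
        Real.sin_le_sin_of_le_of_le_pi_div_two (by linarith) (by linarith) h''
      linarith [sin12]
    · have hm : Real.sin u ≤ Real.sin 1.303 :=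
        Real.sin_le_sin_of_le_of_le_pi_div_two (by linarith) (by linarith) (by linarith)
      linarith [sin13]
  linarith

theorem stmt15 (k s n j : ℕ) (hs : 2 ≤ s) (hn : n = 2 * k)
    (hj2 : 2 ≤ j) (hjk : j ≤ k - 1) :
    (Chebyshev.U ℝ (2 * (s : ℤ))).eval (Real.cos ((j : ℝ) * π / n)) ≥
      -(((s : ℝ) + 1) / 2) := by
  have hk3 : 3 ≤ k := by omega
  have hjk' : j + 1 ≤ k := by omega
  set t : ℝ := (j : ℝ) * π / n with htdef
  have hpi := Real.pi_pos
  have hn0 : (0:ℝ) < n := by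
    have : 0 < n := by omega
    exact_mod_cast this
  have hj0 : (2:ℝ) ≤ (j:ℝ) := by exact_mod_cast hj2
  have ht0 : 0 < t := by
    apply div_pos (by nlinarith) hn0
  have htlt : t < π/2 := by
    rw [htdef, div_lt_iff₀ hn0]
    have hjr : (j:ℝ) + 1 ≤ (k:ℝ) := by exact_mod_cast hjk'
    have hnr : (n:ℝ) = 2*(k:ℝ) := by exact_mod_cast hn
    rw [hnr]
    nlinarith
  have hst : 0 < Real.sin t := Real.sin_pos_of_pos_of_lt_pi ht0 (by linarith)
  set c : ℝ := ((s:ℝ)+1)/2 with hcdef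
  have hc : 3/2 ≤ c := by
    have : (2:ℝ) ≤ (s:ℝ) := by exact_mod_cast hs
    rw [hcdef]; linarith
  have hkey := key_ineq c t hc ht0 htlt
  have heval := Polynomial.Chebyshev.U_real_cos t (2 * (s:ℤ))
  have hcast : ((2 * (s:ℤ) : ℤ) : ℝ) + 1 = 4*c - 1 := by
    push_cast
    rw [hcdef]; ring
  rw [hcast] at heval
  rw [ge_iff_le, show -(((s:ℝ)+1)/2) = -c from by rw [hcdef]]
  have := hkey
  rw [← heval] at this
  exact le_of_mul_le_mul_right (by linarith) hst
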